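/- Let Γ solve the drift-diffusion equation ∂_tΓ + b·∇Γ − ΔΓ + (2/r)∂_rΓ = 0 in Π × (0,T) with Robin condition ∂_nΓ + 2Γ = 0 on ∂Π and initial data Γ₀, where Γ ∈ C^{2,1}(closure(Π)×(0,T]) ∩ C(closure(Π)×[0,T]) and b is continuous and bounded on closure(Π)×[0,T]. Then ‖Γ(·,t)‖_{L^∞(Π)} ≤ ‖Γ₀‖_{L^∞(Π)} for all t ∈ [0,T]. -/

import Mathlib

abbrev E3 := EuclideanSpace ℝ (Fin 3)

noncomputable def cylRad (x : E3) : ℝ := Real.sqrt ((x 0) ^ 2 + (x 1) ^ 2)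

def cylExt : Set E3 := {x | 1 < cylRad x}

noncomputable def pd (f : E3 → ℝ) (i : Fin 3) (x : E3) : ℝ :=
  fderiv ℝ f x (EuclideanSpace.single i 1)

noncomputable def lap (f : E3 → ℝ) (x : E3) : ℝ := ∑ i, pd (fun y => pd f i y) i x

noncomputable def radD (f : E3 → ℝ) (x : E3) : ℝ :=
  (x 0 * pd f 0 x + x 1 * pd f 1 x) / cylRad x

open Set Filter Topology

lemma contDiff_coord (i : Fin 3) : ContDiff ℝ ⊤ (fun x : E3 => x i) :=
  (EuclideanSpace.proj i : E3 →L[ℝ] ℝ).contDiff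

lemma continuous_coord (i : Fin 3) : Continuous (fun x : E3 => x i) :=
  (EuclideanSpace.proj i : E3 →L[ℝ] ℝ).continuous

lemma continuous_cylRad : Continuous cylRad :=
  Real.continuous_sqrt.comp (((continuous_coord 0).pow 2).add ((continuous_coord 1).pow 2))

lemma isOpen_cylExt : IsOpen cylExt :=
  isOpen_lt continuous_const continuous_cylRad

lemma one_le_cylRad_of_mem_closure {x : E3} (hx : x ∈ closure cylExt) : 1 ≤ cylRad x := by
  have h : closure cylExt ⊆ {y : E3 | 1 ≤ cylRad y} :=
    closure_minimal (fun y hy => show (1:ℝ) ≤ cylRad y from le_of_lt hy) (isClosed_le continuous_const continuous_cylRad)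
  exact h hx

lemma cylRad_sq {x : E3} : cylRad x ^ 2 = (x 0) ^ 2 + (x 1) ^ 2 :=
  Real.sq_sqrt (by positivity)

noncomputable def qsum (x : E3) : ℝ := ∑ i, (x i) ^ 2

lemma qsum_nonneg (x : E3) : 0 ≤ qsum x := Finset.sum_nonneg fun i _ => sq_nonneg _

lemma qsum_eq_norm_sq (x : E3) : qsum x = ‖x‖ ^ 2 := by
  rw [EuclideanSpace.norm_eq, Real.sq_sqrt (by positivity)]
  simp [qsum, Real.norm_eq_abs, sq_abs]

lemma contDiff_qsum : ContDiff ℝ ⊤ qsum :=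
  ContDiff.sum fun i _ => (contDiff_coord i).pow 2

lemma hasFDerivAt_qsum (x : E3) :
    HasFDerivAt qsum (∑ i, (2 * x i) • (EuclideanSpace.proj i : E3 →L[ℝ] ℝ)) x := by
  have h : ∀ i : Fin 3, HasFDerivAt (fun y : E3 => (y i) ^ 2)
      ((2 * x i) • (EuclideanSpace.proj i : E3 →L[ℝ] ℝ)) x := by
    intro i
    have hm := ((EuclideanSpace.proj i : E3 →L[ℝ] ℝ).hasFDerivAt (x := x)).mul
      ((EuclideanSpace.proj i : E3 →L[ℝ] ℝ).hasFDerivAt (x := x))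
    have : (fun y : E3 => (y i) ^ 2) = fun y : E3 => y i * y i := by
      funext y; ring
    rw [this, two_mul, add_smul]
    exact hm
  exact HasFDerivAt.fun_sum fun i _ => h i

lemma proj_single (i j : Fin 3) :
    (EuclideanSpace.proj j : E3 →L[ℝ] ℝ) (EuclideanSpace.single i (1:ℝ))
      = if j = i then 1 else 0 := by
  simp [EuclideanSpace.proj, EuclideanSpace.single_apply]

lemma pd_qsum (i : Fin 3) (x : E3) : pd qsum i x = 2 * x i := by
  rw [pd, (hasFDerivAt_qsum x).fderiv]
  simp [proj_single]

lemma coord_abs_le_norm (v : E3) (i : Fin 3) : |v i| ≤ ‖v‖ := by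
  rw [EuclideanSpace.norm_eq]
  have : |v i| = Real.sqrt (‖v i‖ ^ 2) := by
    rw [Real.sqrt_sq_eq_abs]; simp [Real.norm_eq_abs]
  rw [this]
  exact Real.sqrt_le_sqrt (Finset.single_le_sum (f := fun j => ‖v j‖ ^ 2)
    (fun j _ => by positivity) (Finset.mem_univ i))

lemma hasFDerivAt_barrier (f : E3 → ℝ) (c : ℝ) (x : E3) (hf : DifferentiableAt ℝ f x) :
    HasFDerivAt (fun y => f y - c * (1 + qsum y))
      (fderiv ℝ f x - c • (∑ i, (2 * x i) • (EuclideanSpace.proj i : E3 →L[ℝ] ℝ))) x := by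
  exact hf.hasFDerivAt.sub (((hasFDerivAt_qsum x).const_add 1).const_mul c)

lemma pd_barrier (f : E3 → ℝ) (c : ℝ) (i : Fin 3) (x : E3) (hf : DifferentiableAt ℝ f x) :
    pd (fun y => f y - c * (1 + qsum y)) i x = pd f i x - c * (2 * x i) := by
  rw [pd, (hasFDerivAt_barrier f c x hf).fderiv]
  simp [pd, proj_single]

lemma contDiff_pd (f : E3 → ℝ) (hf : ContDiff ℝ 2 f) (i : Fin 3) :
    ContDiff ℝ 1 (fun y => pd f i y) := by
  have h1 : ContDiff ℝ 1 (fderiv ℝ f) := hf.fderiv_right (by norm_num)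
  exact h1.clm_apply contDiff_const

lemma pd_coord_mul (c : ℝ) (i j : Fin 3) (x : E3) :
    pd (fun y => c * (2 * y i)) j x = c * 2 * (if i = j then 1 else 0) := by
  have h : HasFDerivAt (fun y : E3 => c * (2 * y i))
      ((c * 2) • (EuclideanSpace.proj i : E3 →L[ℝ] ℝ)) x := by
    have := ((EuclideanSpace.proj i : E3 →L[ℝ] ℝ).hasFDerivAt (x := x)).const_mul (c * 2)
    have he : (fun y : E3 => c * (2 * y i)) = fun y : E3 => c * 2 * y i := by
      funext y; ring
    rw [he]; exact this
  rw [pd, h.fderiv]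
  simp [proj_single, eq_comm]

lemma pd_pd_barrier (f : E3 → ℝ) (hf : ContDiff ℝ 2 f) (c : ℝ) (i : Fin 3) (x : E3) :
    pd (fun y => pd (fun z => f z - c * (1 + qsum z)) i y) i x
      = pd (fun y => pd f i y) i x - c * 2 := by
  have he : (fun y => pd (fun z => f z - c * (1 + qsum z)) i y)
      = fun y => pd f i y - c * (2 * y i) := by
    funext y
    exact pd_barrier f c i y (hf.differentiable (by norm_num) y)
  rw [he]
  have hd1 : DifferentiableAt ℝ (fun y => pd f i y) x :=
    ((contDiff_pd f hf i).differentiable (by norm_num)) x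
  have hd2 : DifferentiableAt ℝ (fun y : E3 => c * (2 * y i)) x := by
    have : (fun y : E3 => c * (2 * y i)) = fun y : E3 => (c * 2) * y i := by
      funext y; ring
    rw [this]
    exact (((EuclideanSpace.proj i : E3 →L[ℝ] ℝ).differentiable).differentiableAt).const_mul _
  have : pd (fun y => pd f i y - c * (2 * y i)) i x
      = pd (fun y => pd f i y) i x - pd (fun y : E3 => c * (2 * y i)) i x := by
    rw [pd, pd, pd, fderiv_fun_sub hd1 hd2]; simp
  rw [this, pd_coord_mul]
  simp

lemma lap_barrier (f : E3 → ℝ) (hf : ContDiff ℝ 2 f) (c : ℝ) (x : E3) :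
    lap (fun y => f y - c * (1 + qsum y)) x = lap f x - 6 * c := by
  rw [lap, lap]
  rw [Finset.sum_congr rfl (fun i _ => pd_pd_barrier f hf c i x)]
  rw [Finset.sum_sub_distrib]
  simp [Fin.sum_univ_three]; ring

lemma radD_barrier (f : E3 → ℝ) (hfd : Differentiable ℝ f) (c : ℝ) (x : E3)
    (hx : 1 ≤ cylRad x) :
    radD (fun y => f y - c * (1 + qsum y)) x = radD f x - 2 * c * cylRad x := by
  have hr : (0:ℝ) < cylRad x := lt_of_lt_of_le one_pos hx
  rw [radD, radD, pd_barrier f c 0 x (hfd x), pd_barrier f c 1 x (hfd x)]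
  have hsq : (x 0) ^ 2 + (x 1) ^ 2 = cylRad x ^ 2 := cylRad_sq.symm
  field_simp
  linear_combination (-2*c) * hsq

lemma second_deriv_test {g : ℝ → ℝ} (hg : Differentiable ℝ g) {d : ℝ}
    (hd : HasDerivAt (deriv g) d 0) (hmax : IsLocalMax g 0) : d ≤ 0 := by
  by_contra hpos
  push_neg at hpos
  have h0 : deriv g 0 = 0 := hmax.deriv_eq_zero
  -- slope of deriv g tends to d > 0, so deriv g > 0 on a right neighborhood
  have hslope : Filter.Tendsto (fun t => deriv g t / t) (nhdsWithin 0 (Set.Ioi 0)) (nhds d) := by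
    have := (hasDerivAt_iff_tendsto_slope.mp hd).mono_left
      (nhdsWithin_mono 0 (by intro t ht; exact ne_of_gt ht : Set.Ioi (0:ℝ) ⊆ {0}ᶜ))
    have heq : slope (deriv g) 0 = fun t => deriv g t / t := by
      funext t; rw [slope_def_field, h0, sub_zero, sub_zero]
    rwa [heq] at this
  have hev : ∀ᶠ t in nhdsWithin 0 (Set.Ioi 0), 0 < deriv g t / t :=
    hslope.eventually (eventually_gt_nhds hpos)
  obtain ⟨δ, hδmem, hδ'⟩ := mem_nhdsGT_iff_exists_Ioo_subset.mp hev
  have hδpos : 0 < δ := hδmem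
  -- deriv g > 0 on Ioo 0 δ
  have hderivpos : ∀ t ∈ Set.Ioo (0:ℝ) δ, 0 < deriv g t := by
    intro t ht
    have := hδ' ht
    have h1 : 0 < deriv g t / t := this
    have h2 : 0 < t := ht.1
    exact lt_of_lt_of_le (mul_pos h1 h2) (le_of_eq (div_mul_cancel₀ _ (ne_of_gt h2)))
  -- g strictly increasing on [0, δ/2+...]
  have hmono : StrictMonoOn g (Set.Icc 0 (δ/2)) := by
    apply strictMonoOn_of_deriv_pos (convex_Icc _ _) (hg.continuous.continuousOn)
    intro t ht
    rw [interior_Icc] at ht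
    exact hderivpos t ⟨ht.1, lt_of_lt_of_le ht.2 (by linarith)⟩
  -- contradiction with local max
  obtain ⟨δ', hδ'pos, hloc⟩ := Metric.eventually_nhds_iff.mp hmax
  set t := min (δ/2) (δ'/2) with htdef
  have htpos : 0 < t := lt_min (by linarith) (by linarith)
  have h1 : g 0 < g t := hmono ⟨le_refl 0, by linarith⟩
    ⟨le_of_lt htpos, min_le_left _ _⟩ htpos
  have h2 : g t ≤ g 0 := by
    apply hloc
    rw [Real.dist_eq, sub_zero, abs_of_pos htpos]
    calc t ≤ δ'/2 := min_le_right _ _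
    _ < δ' := by linarith
  linarith

lemma lap_nonpos_of_isLocalMax {W : E3 → ℝ} (hW : ContDiff ℝ 2 W) {x₀ : E3}
    (hmax : IsLocalMax W x₀) : lap W x₀ ≤ 0 := by
  rw [lap]
  apply Finset.sum_nonpos
  intro i _
  set v : E3 := EuclideanSpace.single i (1:ℝ) with hv
  set σ : ℝ → E3 := fun s => x₀ + s • v with hσ
  have hσ0 : σ 0 = x₀ := by simp [hσ]
  have hσc : Continuous σ := continuous_const.add (continuous_id.smul continuous_const)
  have hσd : ∀ s : ℝ, HasDerivAt σ v s := by
    intro s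
    have := ((hasDerivAt_id s).smul_const v).const_add x₀; rw [one_smul] at this; exact this
  have hWd : Differentiable ℝ W := hW.differentiable (by norm_num)
  set g : ℝ → ℝ := fun s => W (σ s) with hg
  have hgmax : IsLocalMax g 0 := by
    have h1 : Filter.Tendsto σ (nhds 0) (nhds x₀) := by
      rw [← hσ0]; exact hσc.continuousAt
    have := h1.eventually hmax
    simpa [IsLocalMax, IsMaxFilter, hg, hσ0] using this
  have hσdiff : Differentiable ℝ σ := fun s => (hσd s).differentiableAt
  have hgd : Differentiable ℝ g := hWd.comp hσdiff
  have hg' : ∀ s, HasDerivAt g (pd W i (σ s)) s := by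
    intro s
    have := (hWd (σ s)).hasFDerivAt.comp_hasDerivAt s (hσd s)
    exact this
  have hderiv : deriv g = fun s => pd W i (σ s) := funext fun s => (hg' s).deriv
  have hpdiff : Differentiable ℝ (fun y => pd W i y) :=
    (contDiff_pd W hW i).differentiable (by norm_num)
  have hg'' : HasDerivAt (deriv g) (pd (fun y => pd W i y) i x₀) 0 := by
    rw [hderiv]
    have h3 := (hpdiff (σ 0)).hasFDerivAt.comp_hasDerivAt 0 (hσd 0)
    rw [hσ0] at h3
    exact h3
  exact second_deriv_test hgd hg'' hgmax

lemma derivWithin_time_nonneg {φ : ℝ → ℝ} {T t₀ : ℝ}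
    (ht₀ : t₀ ∈ Set.Ioc 0 T) (hmax : IsMaxOn φ (Set.Icc 0 T) t₀)
    (hdiff : DifferentiableWithinAt ℝ φ (Set.Icc 0 T) t₀) :
    0 ≤ derivWithin φ (Set.Icc 0 T) t₀ := by
  have hcone : (-t₀) ∈ posTangentConeAt (Set.Icc 0 T) t₀ := by
    apply mem_posTangentConeAt_of_segment_subset
    rw [add_neg_cancel]
    rw [segment_symm, segment_eq_Icc (le_of_lt ht₀.1)]
    exact Set.Icc_subset_Icc_right ht₀.2
  have hnp := hmax.localize.hasFDerivWithinAt_nonpos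
    hdiff.hasDerivWithinAt.hasFDerivWithinAt hcone
  simp only [ContinuousLinearMap.toSpanSingleton_apply,
    smul_eq_mul] at hnp
  nlinarith [ht₀.1]

lemma radial_coords (x₀ : E3) (t : ℝ) (j : Fin 3) (hj : j = 0 ∨ j = 1) :
    ((x₀ + t • ((x₀ 0) • (EuclideanSpace.single 0 (1:ℝ) : E3)
        + (x₀ 1) • (EuclideanSpace.single 1 (1:ℝ) : E3)) : E3)) j = (1 + t) * x₀ j := by
  rcases hj with rfl | rfl <;> · simp [EuclideanSpace.single_apply]; ring

lemma cylRad_radial (x₀ : E3) (t : ℝ) (ht : 0 ≤ t) :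
    cylRad (x₀ + t • ((x₀ 0) • EuclideanSpace.single 0 (1:ℝ) + (x₀ 1) • EuclideanSpace.single 1 1))
      = (1 + t) * cylRad x₀ := by
  have h0 := radial_coords x₀ t 0 (Or.inl rfl)
  have h1 := radial_coords x₀ t 1 (Or.inr rfl)
  rw [cylRad, h0, h1]
  have he : ((1+t) * x₀ 0) ^ 2 + ((1+t) * x₀ 1) ^ 2 = (1+t)^2 * ((x₀ 0)^2 + (x₀ 1)^2) := by ring
  rw [he, Real.sqrt_mul (sq_nonneg _), Real.sqrt_sq (by linarith)]
  rfl

lemma radial_mem_posTangentCone {x₀ : E3} (hx₀ : x₀ ∈ closure cylExt) (hr : cylRad x₀ = 1) :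
    ((x₀ 0) • EuclideanSpace.single 0 (1:ℝ) + (x₀ 1) • EuclideanSpace.single 1 1)
      ∈ posTangentConeAt (closure cylExt) x₀ := by
  apply mem_posTangentConeAt_of_segment_subset
  set v : E3 := (x₀ 0) • EuclideanSpace.single 0 (1:ℝ) + (x₀ 1) • EuclideanSpace.single 1 1 with hv
  rw [segment_eq_image']
  rintro z ⟨θ, hθ, rfl⟩
  rw [add_sub_cancel_left]
  rcases eq_or_lt_of_le hθ.1 with h0 | h0
  · rw [← h0]; simpa using hx₀
  · apply subset_closure
    show 1 < cylRad (x₀ + θ • v)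
    rw [hv, cylRad_radial x₀ θ (le_of_lt h0), hr, mul_one]
    linarith

lemma pd_neg (f : E3 → ℝ) (i : Fin 3) (x : E3) :
    pd (fun y => -f y) i x = -pd f i x := by
  rw [pd, pd, fderiv_fun_neg]; simp

lemma lap_neg (f : E3 → ℝ) (x : E3) :
    lap (fun y => -f y) x = -lap f x := by
  rw [lap, lap, ← Finset.sum_neg_distrib]
  apply Finset.sum_congr rfl
  intro i _
  have he : (fun y => pd (fun z => -f z) i y) = fun y => -(pd f i y) :=
    funext fun y => pd_neg f i y
  rw [he, pd_neg]

lemma radD_neg (f : E3 → ℝ) (x : E3) :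
    radD (fun y => -f y) x = -radD f x := by
  rw [radD, radD, pd_neg, pd_neg, ← neg_div]
  ring_nf

set_option maxHeartbeats 2000000 in
lemma oneSided (T : ℝ) (hT : 0 < T) (b : E3 → E3)
    (hbB : ∃ B : ℝ, ∀ x, ‖b x‖ ≤ B)
    (Γ : E3 → ℝ → ℝ) (C : ℝ)
    (hbdd : ∃ C' : ℝ, ∀ x ∈ closure cylExt, ∀ t ∈ Set.Icc 0 T, |Γ x t| ≤ C')
    (hcont : ContinuousOn (fun p : E3 × ℝ => Γ p.1 p.2) (closure cylExt ×ˢ Set.Icc 0 T))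
    (hregx : ∀ t ∈ Set.Ioc 0 T, ContDiff ℝ 2 (fun x => Γ x t))
    (hregt : ∀ x ∈ closure cylExt, ∀ t ∈ Set.Ioc 0 T,
      DifferentiableWithinAt ℝ (Γ x) (Set.Icc 0 T) t)
    (heq : ∀ x ∈ cylExt, ∀ t ∈ Set.Ioc 0 T,
      derivWithin (Γ x) (Set.Icc 0 T) t
        + (∑ i, b x i * pd (fun y => Γ y t) i x)
        - lap (fun y => Γ y t) x
        + (2 / cylRad x) * radD (fun y => Γ y t) x = 0)
    (hRobin : ∀ x, cylRad x = 1 → ∀ t ∈ Set.Ioc 0 T,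
      -(radD (fun y => Γ y t) x) + 2 * Γ x t = 0)
    (hinitC : ∀ x ∈ closure cylExt, Γ x 0 ≤ C) (hC : 0 ≤ C) :
    ∀ t ∈ Set.Icc 0 T, ∀ x ∈ closure cylExt, Γ x t ≤ C := by
  obtain ⟨B₀, hB₀⟩ := hbB
  set B : ℝ := max B₀ 0 with hBdef
  have hB : ∀ y, ‖b y‖ ≤ B := fun y => le_trans (hB₀ y) (le_max_left _ _)
  have hBnn : (0:ℝ) ≤ B := le_max_right _ _
  set L : ℝ := 3 * B + 3 with hLdef
  have hLpos : 0 < L := by positivity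
  intro t ht x hx
  -- the key ε-perturbed bound
  have key : ∀ ε : ℝ, 0 < ε → Γ x t ≤ C + ε * (Real.exp (L*T) * (2 + qsum x)) := by
    intro ε hε
    obtain ⟨C', hC'⟩ := hbdd
    set φ : E3 → ℝ → ℝ := fun y s => Real.exp (L*s) * (1 + qsum y) with hφdef
    set W : E3 → ℝ → ℝ := fun y s => Γ y s - ε * φ y s with hWdef
    have hφpos : ∀ y s, 0 < φ y s := fun y s =>
      mul_pos (Real.exp_pos _) (by nlinarith [qsum_nonneg y])
    have hφone : ∀ y s, 0 ≤ s → 1 + qsum y ≤ φ y s := by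
      intro y s hs
      have h1 : (1:ℝ) ≤ Real.exp (L*s) := Real.one_le_exp (by positivity)
      show 1 + qsum y ≤ Real.exp (L*s) * (1 + qsum y)
      exact le_mul_of_one_le_left (by nlinarith [qsum_nonneg y]) h1
    set D : Set (E3 × ℝ) := closure cylExt ×ˢ Set.Icc 0 T with hDdef
    set a₀ : E3 := EuclideanSpace.single (0 : Fin 3) (2:ℝ) with ha₀def
    have ha₀ : a₀ ∈ cylExt := by
      show 1 < cylRad a₀
      rw [cylRad]
      have h0 : a₀ 0 = 2 := by simp [ha₀def, EuclideanSpace.single_apply]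
      have h1 : a₀ 1 = 0 := by simp [ha₀def, EuclideanSpace.single_apply]
      rw [h0, h1]
      rw [show (2:ℝ)^2 + 0^2 = 2^2 by norm_num, Real.sqrt_sq (by norm_num)]
      norm_num
    have ha₀c : a₀ ∈ closure cylExt := subset_closure ha₀
    have ht0 : (0:ℝ) ∈ Set.Icc 0 T := ⟨le_refl 0, le_of_lt hT⟩
    set m : ℝ := W a₀ 0 with hmdef
    set R : ℝ := max ‖a₀‖ (Real.sqrt (max 0 ((C' - m)/ε))) with hRdef
    have hRnn : 0 ≤ R := le_trans (norm_nonneg _) (le_max_left _ _)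
    have hRsq : max 0 ((C' - m)/ε) ≤ R^2 := by
      have h1 : Real.sqrt (max 0 ((C' - m)/ε)) ≤ R := le_max_right _ _
      have h2 := Real.sq_sqrt (le_max_left 0 ((C' - m)/ε))
      nlinarith [Real.sqrt_nonneg (max 0 ((C' - m)/ε))]
    have houtside : ∀ y ∈ closure cylExt, ∀ s ∈ Set.Icc 0 T, R < ‖y‖ → W y s < m := by
      intro y hy s hs hRy
      have h1 : Γ y s ≤ C' := le_of_abs_le (hC' y hy s hs)
      have h2 : (C' - m)/ε < qsum y := by
        rw [qsum_eq_norm_sq]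
        have : R^2 < ‖y‖^2 := by nlinarith
        calc (C' - m)/ε ≤ max 0 ((C' - m)/ε) := le_max_right _ _
          _ ≤ R^2 := hRsq
          _ < ‖y‖^2 := this
      have h3 : 1 + qsum y ≤ φ y s := hφone y s hs.1
      have h4 : C' - m < ε * qsum y := by
        rw [div_lt_iff₀ hε] at h2; linarith [mul_comm (qsum y) ε]
      have h5 : W y s = Γ y s - ε * φ y s := rfl
      nlinarith
    set K : Set (E3 × ℝ) := (closure cylExt ∩ Metric.closedBall 0 R) ×ˢ Set.Icc 0 T with hKdef
    have hKc : IsCompact K :=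
      ((isCompact_closedBall (0:E3) R).inter_left isClosed_closure).prod isCompact_Icc
    have hKD : K ⊆ D := Set.prod_mono Set.inter_subset_left (subset_refl _)
    have ha₀K : (a₀, (0:ℝ)) ∈ K := by
      refine ⟨⟨ha₀c, ?_⟩, ht0⟩
      rw [Metric.mem_closedBall, dist_zero_right]
      exact le_max_left _ _
    have hWcontD : ContinuousOn (fun p : E3 × ℝ => W p.1 p.2) D := by
      apply hcont.sub
      apply Continuous.continuousOn
      exact continuous_const.mul ((Real.continuous_exp.comp
        (continuous_const.mul continuous_snd)).mul
        (continuous_const.add (contDiff_qsum.continuous.comp continuous_fst)))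
    obtain ⟨p₀, hp₀K, hp₀max⟩ := hKc.exists_isMaxOn ⟨(a₀, 0), ha₀K⟩ (hWcontD.mono hKD)
    set x₀ : E3 := p₀.1 with hx₀def
    set t₀ : ℝ := p₀.2 with ht₀def
    have hx₀ : x₀ ∈ closure cylExt := (hKD hp₀K).1
    have ht₀ : t₀ ∈ Set.Icc 0 T := (hKD hp₀K).2
    have hmaxD : ∀ p ∈ D, W p.1 p.2 ≤ W x₀ t₀ := by
      intro p hp
      by_cases hball : p.1 ∈ Metric.closedBall (0:E3) R
      · exact hp₀max ⟨⟨hp.1, hball⟩, hp.2⟩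
      · have hgt : R < ‖p.1‖ := by
          rw [Metric.mem_closedBall, dist_zero_right, not_le] at hball
          exact hball
        have h1 := houtside p.1 hp.1 p.2 hp.2 hgt
        have h2 : m ≤ W x₀ t₀ := hp₀max ha₀K
        linarith
    have hmkey : W x₀ t₀ ≤ C + ε * Real.exp (L*T) := by
      rcases eq_or_lt_of_le ht₀.1 with h0 | h0
      · -- t₀ = 0
        have hεφ : 0 < ε * φ x₀ t₀ := mul_pos hε (hφpos _ _)
        have h1 : Γ x₀ t₀ ≤ C := by rw [← h0]; exact hinitC x₀ hx₀
        have h2 : W x₀ t₀ = Γ x₀ t₀ - ε * φ x₀ t₀ := rfl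
        have h3 : 0 < ε * Real.exp (L*T) := mul_pos hε (Real.exp_pos _)
        linarith
      · have ht₀' : t₀ ∈ Set.Ioc 0 T := ⟨h0, ht₀.2⟩
        set c : ℝ := ε * Real.exp (L * t₀) with hcdef
        have hcpos : 0 < c := mul_pos hε (Real.exp_pos _)
        have hcT : c ≤ ε * Real.exp (L * T) := by
          have := Real.exp_le_exp.mpr (mul_le_mul_of_nonneg_left ht₀.2 (le_of_lt hLpos))
          nlinarith
        have hΓt : ContDiff ℝ 2 (fun y => Γ y t₀) := hregx t₀ ht₀'
        have hWt : (fun y => W y t₀) = fun y => Γ y t₀ - c * (1 + qsum y) := by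
          funext y; show Γ y t₀ - ε * (Real.exp (L * t₀) * (1 + qsum y)) = _; ring
        have hbarCD : ContDiff ℝ 2 (fun y : E3 => c * (1 + qsum y)) :=
          contDiff_const.mul (contDiff_const.add (contDiff_qsum.of_le le_top))
        have hWt2 : ContDiff ℝ 2 (fun y => W y t₀) := by
          rw [hWt]; exact hΓt.sub hbarCD
        have hWtd : Differentiable ℝ (fun y => W y t₀) := hWt2.differentiable (by norm_num)
        have hmaxx : IsMaxOn (fun y => W y t₀) (closure cylExt) x₀ := by
          intro y hy
          exact hmaxD (y, t₀) ⟨hy, ht₀⟩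
        have hpdWb : ∀ i : Fin 3, pd (fun y => W y t₀) i x₀
            = pd (fun y => Γ y t₀) i x₀ - c * (2 * x₀ i) := by
          intro i
          rw [hWt]
          exact pd_barrier _ c i x₀ (hΓt.differentiable (by norm_num) x₀)
        rcases eq_or_lt_of_le (one_le_cylRad_of_mem_closure hx₀) with hb1 | hb1
        · -- boundary case : cylRad x₀ = 1
          have hr1 : cylRad x₀ = 1 := hb1.symm
          have hvcone := radial_mem_posTangentCone hx₀ hr1
          have hfd : HasFDerivWithinAt (fun y => W y t₀)
              (fderiv ℝ (fun y => W y t₀) x₀) (closure cylExt) x₀ :=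
            (hWtd x₀).hasFDerivAt.hasFDerivWithinAt
          have hnp := hmaxx.localize.hasFDerivWithinAt_nonpos hfd hvcone
          rw [map_add, map_smul, map_smul] at hnp
          have hnp2 : x₀ 0 * pd (fun y => W y t₀) 0 x₀
              + x₀ 1 * pd (fun y => W y t₀) 1 x₀ ≤ 0 := by
            simpa [pd, smul_eq_mul] using hnp
          rw [hpdWb 0, hpdWb 1] at hnp2
          have hRob := hRobin x₀ hr1 t₀ ht₀'
          have hrad : radD (fun y => Γ y t₀) x₀
              = x₀ 0 * pd (fun y => Γ y t₀) 0 x₀ + x₀ 1 * pd (fun y => Γ y t₀) 1 x₀ := by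
            rw [radD, hr1, div_one]
          have hsq1 : (x₀ 0)^2 + (x₀ 1)^2 = 1 := by
            have := cylRad_sq (x := x₀); rw [hr1] at this; nlinarith
          have hΓle : Γ x₀ t₀ ≤ c := by nlinarith
          have hεφ : 0 < c * (1 + qsum x₀) := mul_pos hcpos (by nlinarith [qsum_nonneg x₀])
          have hWv : W x₀ t₀ = Γ x₀ t₀ - c * (1 + qsum x₀) := by
            show Γ x₀ t₀ - ε * (Real.exp (L * t₀) * (1 + qsum x₀)) = _; ring
          linarith
        · -- interior case : contradiction
          exfalso
          have hx₀mem : x₀ ∈ cylExt := hb1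
          have hrpos : 0 < cylRad x₀ := lt_trans one_pos hb1
          have hnhds : closure cylExt ∈ nhds x₀ :=
            Filter.mem_of_superset (isOpen_cylExt.mem_nhds hx₀mem) subset_closure
          have hlocmax : IsLocalMax (fun y => W y t₀) x₀ := hmaxx.isLocalMax hnhds
          have hgrad : fderiv ℝ (fun y => W y t₀) x₀ = 0 := hlocmax.fderiv_eq_zero
          have hpdW : ∀ i : Fin 3, pd (fun y => W y t₀) i x₀ = 0 := by
            intro i; rw [pd, hgrad]; rfl
          have hpdΓ : ∀ i : Fin 3, pd (fun y => Γ y t₀) i x₀ = c * (2 * x₀ i) := by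
            intro i
            have h1 := hpdWb i
            rw [hpdW i] at h1
            linarith
          -- Laplacian bound
          have hlapW : lap (fun y => W y t₀) x₀ ≤ 0 := lap_nonpos_of_isLocalMax hWt2 hlocmax
          have hlapeq : lap (fun y => W y t₀) x₀ = lap (fun y => Γ y t₀) x₀ - 6 * c := by
            rw [hWt]; exact lap_barrier _ hΓt c x₀
          have hlapΓ : lap (fun y => Γ y t₀) x₀ ≤ 6 * c := by linarith
          -- radial derivative
          have hradΓ : radD (fun y => Γ y t₀) x₀ = 2 * c * cylRad x₀ := by
            have h1 : radD (fun y => W y t₀) x₀ = 0 := by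
              rw [radD, hpdW 0, hpdW 1]; simp
            have h2 : radD (fun y => W y t₀) x₀
                = radD (fun y => Γ y t₀) x₀ - 2 * c * cylRad x₀ := by
              rw [hWt]
              exact radD_barrier _ (hΓt.differentiable (by norm_num)) c x₀
                (one_le_cylRad_of_mem_closure hx₀)
            linarith
          -- time derivative bound
          have hψ : ∀ s : ℝ, HasDerivAt (fun u : ℝ => ε * (Real.exp (L*u) * (1 + qsum x₀)))
              (ε * (Real.exp (L*s) * L * (1 + qsum x₀))) s := by
            intro s
            have h1 : HasDerivAt (fun u : ℝ => L * u) L s := by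
              simpa using (hasDerivAt_id s).const_mul L
            have h2 := ((h1.exp).mul_const (1 + qsum x₀)).const_mul ε
            exact h2
          have hmaxt : IsMaxOn (fun s => W x₀ s) (Set.Icc 0 T) t₀ := by
            intro s hs; exact hmaxD (x₀, s) ⟨hx₀, hs⟩
          have hUD : UniqueDiffWithinAt ℝ (Set.Icc (0:ℝ) T) t₀ :=
            (uniqueDiffOn_Icc hT).uniqueDiffWithinAt (Set.Ioc_subset_Icc_self ht₀')
          have hψd : DifferentiableWithinAt ℝ
              (fun u : ℝ => ε * (Real.exp (L*u) * (1 + qsum x₀))) (Set.Icc 0 T) t₀ :=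
            (hψ t₀).differentiableAt.differentiableWithinAt
          have hWteq : (fun s => W x₀ s)
              = fun s => Γ x₀ s - ε * (Real.exp (L*s) * (1 + qsum x₀)) := rfl
          have hdifft : DifferentiableWithinAt ℝ (fun s => W x₀ s) (Set.Icc 0 T) t₀ := by
            rw [hWteq]
            exact (hregt x₀ hx₀ t₀ ht₀').sub hψd
          have h0le : 0 ≤ derivWithin (fun s => W x₀ s) (Set.Icc 0 T) t₀ :=
            derivWithin_time_nonneg ht₀' hmaxt hdifft
          have hsplit : derivWithin (fun s => W x₀ s) (Set.Icc 0 T) t₀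
              = derivWithin (Γ x₀) (Set.Icc 0 T) t₀
                - ε * (Real.exp (L*t₀) * L * (1 + qsum x₀)) := by
            rw [hWteq, derivWithin_fun_sub (hregt x₀ hx₀ t₀ ht₀') hψd,
              (hψ t₀).hasDerivWithinAt.derivWithin hUD]
          have hdt : c * (L * (1 + qsum x₀)) ≤ derivWithin (Γ x₀) (Set.Icc 0 T) t₀ := by
            rw [hsplit] at h0le; rw [hcdef]; nlinarith
          -- drift bound
          have hcoord : ∀ i : Fin 3, |b x₀ i * x₀ i| ≤ B * ((1 + (x₀ i)^2)/2) := by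
            intro i
            rw [abs_mul]
            have h1 : |b x₀ i| ≤ B := le_trans (coord_abs_le_norm (b x₀) i) (hB x₀)
            have h2 : |x₀ i| ≤ (1 + (x₀ i)^2)/2 := by nlinarith [sq_abs (x₀ i), abs_nonneg (x₀ i), sq_nonneg (|x₀ i| - 1)]
            nlinarith [abs_nonneg (b x₀ i), abs_nonneg (x₀ i)]
          have hsumabs : |∑ i, b x₀ i * x₀ i| ≤ B * ((3 + qsum x₀)/2) := by
            calc |∑ i, b x₀ i * x₀ i| ≤ ∑ i, |b x₀ i * x₀ i| :=
                Finset.abs_sum_le_sum_abs _ _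
              _ ≤ ∑ i, B * ((1 + (x₀ i)^2)/2) :=
                Finset.sum_le_sum fun i _ => hcoord i
              _ = B * ((3 + qsum x₀)/2) := by
                rw [qsum, Fin.sum_univ_three, Fin.sum_univ_three]; ring
          have hdrift : ∑ i, b x₀ i * pd (fun y => Γ y t₀) i x₀
              = 2 * c * (∑ i, b x₀ i * x₀ i) := by
            rw [Finset.mul_sum]
            apply Finset.sum_congr rfl
            intro i _
            rw [hpdΓ i]; ring
          have heq0 := heq x₀ hx₀mem t₀ ht₀'
          rw [hdrift, hradΓ] at heq0
          have hrterm : 2 / cylRad x₀ * (2 * c * cylRad x₀) = 4 * c := by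
            field_simp; ring
          rw [hrterm] at heq0
          have hsumlb : -(B * ((3 + qsum x₀)/2)) ≤ ∑ i, b x₀ i * x₀ i :=
            (abs_le.mp hsumabs).1
          have hq : 0 ≤ qsum x₀ := qsum_nonneg x₀
          have hfin : 0 < derivWithin (Γ x₀) (Set.Icc 0 T) t₀
              + 2 * c * (∑ i, b x₀ i * x₀ i) - lap (fun y => Γ y t₀) x₀ + 4 * c := by
            have e1 : 2 * c * (-(B * ((3 + qsum x₀)/2))) ≤ 2 * c * (∑ i, b x₀ i * x₀ i) :=
              mul_le_mul_of_nonneg_left hsumlb (by positivity)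
            have e2 : c * (L * (1 + qsum x₀)) - 2 * c * (B * ((3 + qsum x₀)/2)) - 6*c + 4*c
                = c * (2 * B * qsum x₀ + 3 * qsum x₀ + 1) := by
              rw [hLdef]; ring
            nlinarith [mul_nonneg (mul_nonneg hcpos.le hBnn) hq, mul_nonneg hcpos.le hq]
          linarith
    -- conclude from the max bound
    have hxt : W x t ≤ W x₀ t₀ := hmaxD (x, t) ⟨hx, ht⟩
    have hWxt : W x t = Γ x t - ε * (Real.exp (L*t) * (1 + qsum x)) := rfl
    have hexp : Real.exp (L*t) ≤ Real.exp (L*T) :=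
      Real.exp_le_exp.mpr (mul_le_mul_of_nonneg_left ht.2 (le_of_lt hLpos))
    have hq : 0 ≤ qsum x := qsum_nonneg x
    have hfin : ε * (Real.exp (L*t) * (1 + qsum x)) + ε * Real.exp (L*T)
        ≤ ε * (Real.exp (L*T) * (2 + qsum x)) := by
      have : Real.exp (L*t) * (1 + qsum x) ≤ Real.exp (L*T) * (1 + qsum x) :=
        mul_le_mul_of_nonneg_right hexp (by linarith)
      nlinarith
    linarith
  -- ε → 0
  by_contra hcon
  push_neg at hcon
  set Kc : ℝ := Real.exp (L*T) * (2 + qsum x) with hKdef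
  have hKpos : 0 < Kc := mul_pos (Real.exp_pos _) (by nlinarith [qsum_nonneg x])
  have h1 := key ((Γ x t - C) / (2 * Kc)) (div_pos (by linarith) (by positivity))
  rw [div_mul_eq_mul_div, mul_comm] at h1
  have h2 : Kc * (Γ x t - C) / (2 * Kc) = (Γ x t - C)/2 := by
    field_simp
  nlinarith

lemma single_two_mem : EuclideanSpace.single (0 : Fin 3) (2:ℝ) ∈ cylExt := by
  show 1 < cylRad (EuclideanSpace.single (0 : Fin 3) (2:ℝ))
  rw [cylRad]
  have h0 : (EuclideanSpace.single (0 : Fin 3) (2:ℝ)) 0 = 2 := by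
    simp [EuclideanSpace.single_apply]
  have h1 : (EuclideanSpace.single (0 : Fin 3) (2:ℝ)) 1 = 0 := by
    simp [EuclideanSpace.single_apply]
  rw [h0, h1, show (2:ℝ)^2 + 0^2 = 2^2 by norm_num, Real.sqrt_sq (by norm_num)]
  norm_num


/-- Lemma 3.1: for classical solutions of the drift-diffusion equation
    ∂_tΓ + b·∇Γ − ΔΓ + (2/r)∂_rΓ = 0 with Robin condition ∂_nΓ + 2Γ = 0 on ∂Π and
    bounded continuous drift b, the L^∞ bound of the initial data is preserved:
    ‖Γ(·,t)‖_{L^∞(Π)} ≤ ‖Γ₀‖_{L^∞(Π)}. -/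
theorem stmt6 (T : ℝ) (hT : 0 < T) (b : E3 → E3) (hb : Continuous b)
    (hbB : ∃ B : ℝ, ∀ x, ‖b x‖ ≤ B)
    (Γ : E3 → ℝ → ℝ) (Γ₀ : E3 → ℝ) (C : ℝ)
    (hbdd : ∃ C' : ℝ, ∀ x ∈ closure cylExt, ∀ t ∈ Set.Icc 0 T, |Γ x t| ≤ C')
    (hcont : ContinuousOn (fun p : E3 × ℝ => Γ p.1 p.2) (closure cylExt ×ˢ Set.Icc 0 T))
    (hregx : ∀ t ∈ Set.Ioc 0 T, ContDiff ℝ 2 (fun x => Γ x t))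
    (hregt : ∀ x ∈ closure cylExt, ∀ t ∈ Set.Ioc 0 T,
      DifferentiableWithinAt ℝ (Γ x) (Set.Icc 0 T) t)
    (heq : ∀ x ∈ cylExt, ∀ t ∈ Set.Ioc 0 T,
      derivWithin (Γ x) (Set.Icc 0 T) t
        + (∑ i, b x i * pd (fun y => Γ y t) i x)
        - lap (fun y => Γ y t) x
        + (2 / cylRad x) * radD (fun y => Γ y t) x = 0)
    (hRobin : ∀ x, cylRad x = 1 → ∀ t ∈ Set.Ioc 0 T,
      -(radD (fun y => Γ y t) x) + 2 * Γ x t = 0)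
    (hinit : ∀ x ∈ closure cylExt, Γ x 0 = Γ₀ x)
    (hΓ₀ : ∀ x ∈ closure cylExt, |Γ₀ x| ≤ C) :
    ∀ t ∈ Set.Icc 0 T, ∀ x ∈ cylExt, |Γ x t| ≤ C := by

  have hC : 0 ≤ C :=
    le_trans (abs_nonneg _) (hΓ₀ _ (subset_closure single_two_mem))
  have hupper := oneSided T hT b hbB Γ C hbdd hcont hregx hregt heq hRobin
    (fun y hy => by rw [hinit y hy]; exact le_of_abs_le (hΓ₀ y hy)) hC
  -- negated solution
  set Γn : E3 → ℝ → ℝ := fun y s => -Γ y s with hΓn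
  have hbddn : ∃ C' : ℝ, ∀ x ∈ closure cylExt, ∀ t ∈ Set.Icc 0 T, |Γn x t| ≤ C' := by
    obtain ⟨C', h⟩ := hbdd
    exact ⟨C', fun y hy s hs => by simpa [hΓn, abs_neg] using h y hy s hs⟩
  have hcontn : ContinuousOn (fun p : E3 × ℝ => Γn p.1 p.2)
      (closure cylExt ×ˢ Set.Icc 0 T) := hcont.neg
  have hregxn : ∀ t ∈ Set.Ioc 0 T, ContDiff ℝ 2 (fun x => Γn x t) :=
    fun s hs => (hregx s hs).neg
  have hregtn : ∀ x ∈ closure cylExt, ∀ t ∈ Set.Ioc 0 T,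
      DifferentiableWithinAt ℝ (Γn x) (Set.Icc 0 T) t :=
    fun y hy s hs => (hregt y hy s hs).neg
  have heqn : ∀ x ∈ cylExt, ∀ t ∈ Set.Ioc 0 T,
      derivWithin (Γn x) (Set.Icc 0 T) t
        + (∑ i, b x i * pd (fun y => Γn y t) i x)
        - lap (fun y => Γn y t) x
        + (2 / cylRad x) * radD (fun y => Γn y t) x = 0 := by
    intro y hy s hs
    have hUD : UniqueDiffWithinAt ℝ (Set.Icc (0:ℝ) T) s :=
      (uniqueDiffOn_Icc hT).uniqueDiffWithinAt (Set.Ioc_subset_Icc_self hs)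
    have e1 : derivWithin (Γn y) (Set.Icc 0 T) s = -derivWithin (Γ y) (Set.Icc 0 T) s :=
      derivWithin.neg
    have e2 : ∑ i, b y i * pd (fun z => Γn z s) i y
        = -∑ i, b y i * pd (fun z => Γ z s) i y := by
      rw [← Finset.sum_neg_distrib]
      apply Finset.sum_congr rfl
      intro i _
      rw [show (fun z => Γn z s) = (fun z => -Γ z s) from rfl, pd_neg]; ring
    have e3 : lap (fun z => Γn z s) y = -lap (fun z => Γ z s) y := lap_neg _ _
    have e4 : radD (fun z => Γn z s) y = -radD (fun z => Γ z s) y := radD_neg _ _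
    rw [e1, e2, e3, e4]
    have := heq y hy s hs
    linarith [this]
  have hRobinn : ∀ x, cylRad x = 1 → ∀ t ∈ Set.Ioc 0 T,
      -(radD (fun y => Γn y t) x) + 2 * Γn x t = 0 := by
    intro y hy s hs
    have := hRobin y hy s hs
    rw [radD_neg]
    show -(-(radD (fun z => Γ z s) y)) + 2 * (-(Γ y s)) = 0
    linarith
  have hlower := oneSided T hT b hbB Γn C hbddn hcontn hregxn hregtn heqn hRobinn
    (fun y hy => by
      show -(Γ y 0) ≤ C
      rw [hinit y hy]
      linarith [(abs_le.mp (hΓ₀ y hy)).1]) hC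
  intro s hs y hy
  have h1 := hupper s hs y (subset_closure hy)
  have h2 := hlower s hs y (subset_closure hy)
  rw [abs_le]
  constructor
  · have : -(Γ y s) ≤ C := h2
    linarith
  · exact h1
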